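/- Let m, n, N ∈ ℕ with N ≥ 4, and let L_d : ℝ^m × ℝ^m × ℝ^m × Matrix(n,ℝ) × Matrix(n,ℝ) → ℝ be smooth on the open set where the two matrix arguments are invertible (a G-invariant discrete second-order Lagrangian, depending on the group only through W_k, W_{k+1}). Given q₀, …, q_N ∈ ℝ^m and invertible g₀, …, g_N ∈ Matrix(n,ℝ), set W_k = g_k⁻¹ g_{k+1} and A_d = Σ_{k=0}^{N-2} L_d(q_k, q_{k+1}, q_{k+2}, W_k, W_{k+1}). Then the following are equivalent. (a) For all δq₀, …, δq_N ∈ ℝ^m with δq₀ = δq₁ = δq_{N-1} = δq_N = 0 and all Σ₀, …, Σ_N ∈ Matrix(n,ℝ) with Σ₀ = Σ₁ = Σ_{N-1} = Σ_N = 0, the derivative at ε = 0 of A_d along q_k(ε) = q_k + ε δq_k and W_k(ε) = exp(−ε Σ_k) W_k exp(ε Σ_{k+1}) vanishes. (b) The discrete second-order Lagrange–Poincaré equations hold for k = 2, …, N−2: D₁L_d|_k + D₂L_d|_{k-1} + D₃L_d|_{k-2} = 0 in (ℝ^m)*, and for every η ∈ Matrix(n,ℝ): D₄L_d|_{k-1}(W_{k-1}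 η) − D₄L_d|_k(η W_k) − D₅L_d|_{k-1}(η W_k) + D₅L_d|_{k-2}(W_{k-1} η) = 0, where D_iL_d|_j denotes the i-th partial Fréchet derivative of L_d evaluated at (q_j, q_{j+1}, q_{j+2}, W_j, W_{j+1}). -/

import Mathlib

open scoped ContDiff BigOperators

attribute [local instance] Matrix.normedAddCommGroup Matrix.normedSpace

namespace Stmt9

variable {m n : ℕ}

abbrev Vec (m : ℕ) := Fin m → ℝ
abbrev Mat (n : ℕ) := Matrix (Fin n) (Fin n) ℝ

abbrev Tup (m n : ℕ) := Vec m × Vec m × Vec m × Mat n × Mat n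

noncomputable def D1 (L : Tup m n → ℝ) (p : Tup m n) : Vec m →L[ℝ] ℝ :=
  fderiv ℝ (fun x => L (x, p.2.1, p.2.2.1, p.2.2.2.1, p.2.2.2.2)) p.1

noncomputable def D2 (L : Tup m n → ℝ) (p : Tup m n) : Vec m →L[ℝ] ℝ :=
  fderiv ℝ (fun x => L (p.1, x, p.2.2.1, p.2.2.2.1, p.2.2.2.2)) p.2.1

noncomputable def D3 (L : Tup m n → ℝ) (p : Tup m n) : Vec m →L[ℝ] ℝ :=
  fderiv ℝ (fun x => L (p.1, p.2.1, x, p.2.2.2.1, p.2.2.2.2)) p.2.2.1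

noncomputable def D4 (L : Tup m n → ℝ) (p : Tup m n) : Mat n →L[ℝ] ℝ :=
  fderiv ℝ (fun x => L (p.1, p.2.1, p.2.2.1, x, p.2.2.2.2)) p.2.2.2.1

noncomputable def D5 (L : Tup m n → ℝ) (p : Tup m n) : Mat n →L[ℝ] ℝ :=
  fderiv ℝ (fun x => L (p.1, p.2.1, p.2.2.1, p.2.2.2.1, x)) p.2.2.2.2

/-- the discrete point `(q_j, q_{j+1}, q_{j+2}, W_j, W_{j+1})` -/
noncomputable def dpt (q : ℕ → Vec m) (g : ℕ → Mat n) (j : ℕ) : Tup m n :=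
  (q j, q (j + 1), q (j + 2), (g j)⁻¹ * g (j + 1), (g (j + 1))⁻¹ * g (j + 2))

/-! ### Auxiliary lemmas -/

section linfty
attribute [local instance] Matrix.linftyOpNormedAddCommGroup Matrix.linftyOpNormedRing
  Matrix.linftyOpNormedSpace Matrix.linftyOpNormedAlgebra

lemma entry_hasDerivAt (W S S' : Mat n) (i j : Fin n) :
    HasDerivAt (fun ε : ℝ =>
      (NormedSpace.exp (-(ε • S)) * W * NormedSpace.exp (ε • S')) i j)
      ((W * S' - S * W) i j) 0 := by
  have h1 : HasDerivAt (fun ε : ℝ => NormedSpace.exp (-(ε • S))) (-S) 0 := by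
    have := hasDerivAt_exp_smul_const (𝕂 := ℝ) (-S) 0
    simp at this; exact this
  have h2 : HasDerivAt (fun ε : ℝ => NormedSpace.exp (ε • S')) S' 0 := by
    have := hasDerivAt_exp_smul_const (𝕂 := ℝ) S' 0
    simp at this; exact this
  have h3 : HasDerivAt (fun ε : ℝ =>
      NormedSpace.exp (-(ε • S)) * W * NormedSpace.exp (ε • S')) (W * S' - S * W) 0 := by
    have := (h1.mul_const W).mul h2
    simp only [zero_smul, neg_zero, NormedSpace.exp_zero, one_mul, mul_one] at this
    rw [show W * S' - S * W = -S * W + W * S' by noncomm_ring]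
    exact this
  exact (LinearMap.toContinuousLinearMap
    (Matrix.entryLinearMap ℝ ℝ i j)).hasFDerivAt.comp_hasDerivAt 0 h3

end linfty

lemma conj_hasDerivAt (W S S' : Mat n) :
    HasDerivAt (fun ε : ℝ =>
      NormedSpace.exp (-(ε • S)) * W * NormedSpace.exp (ε • S'))
      (W * S' - S * W) 0 := by
  apply hasDerivAt_pi.2
  intro i
  apply hasDerivAt_pi.2
  intro j
  exact entry_hasDerivAt W S S' i j

lemma line_hasDerivAt (q v : Vec m) :
    HasDerivAt (fun ε : ℝ => q + ε • v) v 0 := by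
  simpa using ((hasDerivAt_id (0:ℝ)).smul_const v).const_add q

lemma fderiv_decomp (L : Tup m n → ℝ) (p : Tup m n) (hd : DifferentiableAt ℝ L p)
    (v : Tup m n) :
    fderiv ℝ L p v = D1 L p v.1 + D2 L p v.2.1 + D3 L p v.2.2.1
      + D4 L p v.2.2.2.1 + D5 L p v.2.2.2.2 := by
  obtain ⟨a, b, c, M, P⟩ := v
  obtain ⟨p1, p2, p3, p4, p5⟩ := p
  set f' := fderiv ℝ L (p1, p2, p3, p4, p5) with hf'
  have hL := hd.hasFDerivAt
  rw [← hf'] at hL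
  have e1 : D1 L (p1, p2, p3, p4, p5) a = f' (a, 0, 0, 0, 0) := by
    have h' : HasFDerivAt (fun x : Vec m => L (x, p2, p3, p4, p5))
        (f'.comp (ContinuousLinearMap.inl ℝ (Vec m) (Vec m × Vec m × Mat n × Mat n))) p1 :=
      hL.comp p1 (hasFDerivAt_prodMk_left (𝕜 := ℝ) p1
        ((p2, p3, p4, p5) : Vec m × Vec m × Mat n × Mat n))
    simp only [D1]; rw [h'.fderiv]; rfl
  have e2 : D2 L (p1, p2, p3, p4, p5) b = f' (0, b, 0, 0, 0) := by
    have h' : HasFDerivAt (fun x : Vec m => L (p1, x, p3, p4, p5))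
        (f'.comp ((ContinuousLinearMap.inr ℝ (Vec m) _).comp
          (ContinuousLinearMap.inl ℝ (Vec m) (Vec m × Mat n × Mat n)))) p2 :=
      hL.comp p2 ((hasFDerivAt_prodMk_right (𝕜 := ℝ) p1 _).comp p2
        (hasFDerivAt_prodMk_left (𝕜 := ℝ) p2 ((p3, p4, p5) : Vec m × Mat n × Mat n)))
    simp only [D2]; rw [h'.fderiv]; rfl
  have e3 : D3 L (p1, p2, p3, p4, p5) c = f' (0, 0, c, 0, 0) := by
    have h' : HasFDerivAt (fun x : Vec m => L (p1, p2, x, p4, p5))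
        (f'.comp ((ContinuousLinearMap.inr ℝ (Vec m) _).comp
          ((ContinuousLinearMap.inr ℝ (Vec m) _).comp
            (ContinuousLinearMap.inl ℝ (Vec m) (Mat n × Mat n))))) p3 :=
      hL.comp p3 ((hasFDerivAt_prodMk_right (𝕜 := ℝ) p1 _).comp p3
        ((hasFDerivAt_prodMk_right (𝕜 := ℝ) p2 _).comp p3
          (hasFDerivAt_prodMk_left (𝕜 := ℝ) p3 ((p4, p5) : Mat n × Mat n))))
    simp only [D3]; rw [h'.fderiv]; rfl
  have e4 : D4 L (p1, p2, p3, p4, p5) M = f' (0, 0, 0, M, 0) := by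
    have h' : HasFDerivAt (fun x : Mat n => L (p1, p2, p3, x, p5))
        (f'.comp ((ContinuousLinearMap.inr ℝ (Vec m) _).comp
          ((ContinuousLinearMap.inr ℝ (Vec m) _).comp
            ((ContinuousLinearMap.inr ℝ (Vec m) _).comp
              (ContinuousLinearMap.inl ℝ (Mat n) (Mat n)))))) p4 :=
      hL.comp p4 ((hasFDerivAt_prodMk_right (𝕜 := ℝ) p1 _).comp p4
        ((hasFDerivAt_prodMk_right (𝕜 := ℝ) p2 _).comp p4
          ((hasFDerivAt_prodMk_right (𝕜 := ℝ) p3 _).comp p4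
            (hasFDerivAt_prodMk_left (𝕜 := ℝ) p4 p5))))
    simp only [D4]; rw [h'.fderiv]; rfl
  have e5 : D5 L (p1, p2, p3, p4, p5) P = f' (0, 0, 0, 0, P) := by
    have h' : HasFDerivAt (fun x : Mat n => L (p1, p2, p3, p4, x))
        (f'.comp ((ContinuousLinearMap.inr ℝ (Vec m) _).comp
          ((ContinuousLinearMap.inr ℝ (Vec m) _).comp
            ((ContinuousLinearMap.inr ℝ (Vec m) _).comp
              (ContinuousLinearMap.inr ℝ (Mat n) (Mat n)))))) p5 :=
      hL.comp p5 ((hasFDerivAt_prodMk_right (𝕜 := ℝ) p1 _).comp p5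
        ((hasFDerivAt_prodMk_right (𝕜 := ℝ) p2 _).comp p5
          ((hasFDerivAt_prodMk_right (𝕜 := ℝ) p3 _).comp p5
            (hasFDerivAt_prodMk_right (𝕜 := ℝ) p4 p5))))
    simp only [D5]; rw [h'.fderiv]; rfl
  have hv : ((a, b, c, M, P) : Tup m n)
      = (a, 0, 0, 0, 0) + (0, b, 0, 0, 0) + (0, 0, c, 0, 0) + (0, 0, 0, M, 0)
        + (0, 0, 0, 0, P) := by
    simp [Prod.ext_iff]
  show f' (a, b, c, M, P) = D1 L (p1, p2, p3, p4, p5) a + D2 L (p1, p2, p3, p4, p5) b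
    + D3 L (p1, p2, p3, p4, p5) c + D4 L (p1, p2, p3, p4, p5) M + D5 L (p1, p2, p3, p4, p5) P
  rw [e1, e2, e3, e4, e5, hv, map_add, map_add, map_add, map_add]

lemma isOpen_pairUnits : IsOpen {p : Tup m n | IsUnit p.2.2.2.1 ∧ IsUnit p.2.2.2.2} := by
  have h1 : IsOpen {A : Mat n | IsUnit A} := by
    have he : {A : Mat n | IsUnit A} = (fun A : Mat n => A.det) ⁻¹' {x | x ≠ 0} := by
      ext A
      simp [Matrix.isUnit_iff_isUnit_det, isUnit_iff_ne_zero]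
    rw [he]
    exact isOpen_ne.preimage (continuous_id.matrix_det)
  have hc1 : Continuous fun p : Tup m n => p.2.2.2.1 :=
    continuous_fst.comp (continuous_snd.comp (continuous_snd.comp continuous_snd))
  have hc2 : Continuous fun p : Tup m n => p.2.2.2.2 :=
    continuous_snd.comp (continuous_snd.comp (continuous_snd.comp continuous_snd))
  exact (h1.preimage hc1).inter (h1.preimage hc2)

lemma hdiff_dpt (L : Tup m n → ℝ)
    (hL : ContDiffOn ℝ ∞ L {p : Tup m n | IsUnit p.2.2.2.1 ∧ IsUnit p.2.2.2.2})
    (q : ℕ → Vec m) (g : ℕ → Mat n) (hg : ∀ i, IsUnit (g i)) (k : ℕ) :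
    DifferentiableAt ℝ L (dpt q g k) := by
  have hmem : dpt q g k ∈ {p : Tup m n | IsUnit p.2.2.2.1 ∧ IsUnit p.2.2.2.2} :=
    ⟨(Matrix.isUnit_nonsing_inv_iff.2 (hg k)).mul (hg (k+1)),
     (Matrix.isUnit_nonsing_inv_iff.2 (hg (k+1))).mul (hg (k+2))⟩
  exact (hL.contDiffAt (isOpen_pairUnits.mem_nhds hmem)).differentiableAt
    (by simp)

lemma summand_hasDerivAt (L : Tup m n → ℝ)
    (q : ℕ → Vec m) (g : ℕ → Mat n) (δq : ℕ → Vec m) (S : ℕ → Mat n) (k : ℕ)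
    (hd : DifferentiableAt ℝ L (dpt q g k)) :
    HasDerivAt (fun ε : ℝ =>
      L (q k + ε • δq k, q (k + 1) + ε • δq (k + 1), q (k + 2) + ε • δq (k + 2),
        NormedSpace.exp (-(ε • S k)) * ((g k)⁻¹ * g (k + 1))
          * NormedSpace.exp (ε • S (k + 1)),
        NormedSpace.exp (-(ε • S (k + 1))) * ((g (k + 1))⁻¹ * g (k + 2))
          * NormedSpace.exp (ε • S (k + 2))))
      (fderiv ℝ L (dpt q g k)
        (δq k, δq (k + 1), δq (k + 2),
         ((g k)⁻¹ * g (k + 1)) * S (k + 1) - S k * ((g k)⁻¹ * g (k + 1)),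
         ((g (k + 1))⁻¹ * g (k + 2)) * S (k + 2) - S (k + 1) * ((g (k + 1))⁻¹ * g (k + 2))))
      0 := by
  have hγ : HasDerivAt (fun ε : ℝ =>
      ((q k + ε • δq k, q (k + 1) + ε • δq (k + 1), q (k + 2) + ε • δq (k + 2),
        NormedSpace.exp (-(ε • S k)) * ((g k)⁻¹ * g (k + 1))
          * NormedSpace.exp (ε • S (k + 1)),
        NormedSpace.exp (-(ε • S (k + 1))) * ((g (k + 1))⁻¹ * g (k + 2))
          * NormedSpace.exp (ε • S (k + 2))) : Tup m n))
      ((δq k, δq (k + 1), δq (k + 2),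
         ((g k)⁻¹ * g (k + 1)) * S (k + 1) - S k * ((g k)⁻¹ * g (k + 1)),
         ((g (k + 1))⁻¹ * g (k + 2)) * S (k + 2) - S (k + 1) * ((g (k + 1))⁻¹ * g (k + 2)))
        : Tup m n) 0 :=
    (line_hasDerivAt _ _).prodMk ((line_hasDerivAt _ _).prodMk ((line_hasDerivAt _ _).prodMk
      ((conj_hasDerivAt _ _ _).prodMk (conj_hasDerivAt _ _ _))))
  have h0 : ((q k + (0:ℝ) • δq k, q (k + 1) + (0:ℝ) • δq (k + 1),
      q (k + 2) + (0:ℝ) • δq (k + 2),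
      NormedSpace.exp (-((0:ℝ) • S k)) * ((g k)⁻¹ * g (k + 1))
        * NormedSpace.exp ((0:ℝ) • S (k + 1)),
      NormedSpace.exp (-((0:ℝ) • S (k + 1))) * ((g (k + 1))⁻¹ * g (k + 2))
        * NormedSpace.exp ((0:ℝ) • S (k + 2))) : Tup m n) = dpt q g k := by
    simp [dpt, NormedSpace.exp_zero]
  have hf : HasFDerivAt L (fderiv ℝ L (dpt q g k))
      ((q k + (0:ℝ) • δq k, q (k + 1) + (0:ℝ) • δq (k + 1),
      q (k + 2) + (0:ℝ) • δq (k + 2),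
      NormedSpace.exp (-((0:ℝ) • S k)) * ((g k)⁻¹ * g (k + 1))
        * NormedSpace.exp ((0:ℝ) • S (k + 1)),
      NormedSpace.exp (-((0:ℝ) • S (k + 1))) * ((g (k + 1))⁻¹ * g (k + 2))
        * NormedSpace.exp ((0:ℝ) • S (k + 2))) : Tup m n) := by
    rw [h0]; exact hd.hasFDerivAt
  exact hf.comp_hasDerivAt 0 hγ

lemma sumL0 {X : Type*} [AddCommGroup X] (M : ℕ) (f : ℕ → X)
    (h3 : f (M + 3) = 0) (h4 : f (M + 4) = 0) :
    ∑ j ∈ Finset.range (M + 5), f j = ∑ k ∈ Finset.range (M + 3), f k := by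
  rw [show M + 5 = (M + 4) + 1 from rfl, Finset.sum_range_succ, h4, add_zero,
    show M + 4 = (M + 3) + 1 from rfl, Finset.sum_range_succ, h3, add_zero]

lemma sumL1 {X : Type*} [AddCommGroup X] (M : ℕ) (f : ℕ → X)
    (h0 : f 0 = 0) (h4 : f (M + 4) = 0) :
    ∑ j ∈ Finset.range (M + 5), f j = ∑ k ∈ Finset.range (M + 3), f (k + 1) := by
  rw [show M + 5 = (M + 4) + 1 from rfl, Finset.sum_range_succ, h4, add_zero,
    show M + 4 = (M + 3) + 1 from rfl, Finset.sum_range_succ', h0, add_zero]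

lemma sumL2 {X : Type*} [AddCommGroup X] (M : ℕ) (f : ℕ → X)
    (h0 : f 0 = 0) (h1 : f 1 = 0) :
    ∑ j ∈ Finset.range (M + 5), f j = ∑ k ∈ Finset.range (M + 3), f (k + 2) := by
  rw [show M + 5 = (M + 4) + 1 from rfl, Finset.sum_range_succ']
  rw [show M + 4 = (M + 3) + 1 from rfl, Finset.sum_range_succ']
  simp [h0, h1]

/-- the `j`-th discrete Lagrange–Poincaré expression paired with the variations -/
noncomputable def Pterm (L : Tup m n → ℝ) (q : ℕ → Vec m) (g : ℕ → Mat n)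
    (δq : ℕ → Vec m) (S : ℕ → Mat n) (j : ℕ) : ℝ :=
  D1 L (dpt q g j) (δq j) + D2 L (dpt q g (j - 1)) (δq j) + D3 L (dpt q g (j - 2)) (δq j)
  + (D4 L (dpt q g (j - 1)) ((g (j - 1))⁻¹ * g j * S j)
     - D4 L (dpt q g j) (S j * ((g j)⁻¹ * g (j + 1)))
     - D5 L (dpt q g (j - 1)) (S j * ((g j)⁻¹ * g (j + 1)))
     + D5 L (dpt q g (j - 2)) ((g (j - 1))⁻¹ * g j * S j))

lemma master (M : ℕ) (L : Tup m n → ℝ)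
    (hL : ContDiffOn ℝ ∞ L {p : Tup m n | IsUnit p.2.2.2.1 ∧ IsUnit p.2.2.2.2})
    (q : ℕ → Vec m) (g : ℕ → Mat n) (hg : ∀ i, IsUnit (g i))
    (δq : ℕ → Vec m) (S : ℕ → Mat n)
    (hq0 : δq 0 = 0) (hq1 : δq 1 = 0) (hq3 : δq (M + 3) = 0) (hq4 : δq (M + 4) = 0)
    (hS0 : S 0 = 0) (hS1 : S 1 = 0) (hS3 : S (M + 3) = 0) (hS4 : S (M + 4) = 0) :
    deriv (fun ε : ℝ =>
      ∑ k ∈ Finset.range (M + 3),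
        L (q k + ε • δq k, q (k + 1) + ε • δq (k + 1), q (k + 2) + ε • δq (k + 2),
          NormedSpace.exp (-(ε • S k)) * ((g k)⁻¹ * g (k + 1))
            * NormedSpace.exp (ε • S (k + 1)),
          NormedSpace.exp (-(ε • S (k + 1))) * ((g (k + 1))⁻¹ * g (k + 2))
            * NormedSpace.exp (ε • S (k + 2)))) 0
    = ∑ j ∈ Finset.range (M + 5), Pterm L q g δq S j := by
  have hdiff : ∀ k : ℕ, DifferentiableAt ℝ L (dpt q g k) := hdiff_dpt L hL q g hg
  have hsum := HasDerivAt.fun_sum (u := Finset.range (M + 3)) (x := (0:ℝ))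
    (fun k _ => summand_hasDerivAt L q g δq S k (hdiff k))
  rw [hsum.deriv]
  have hde : ∀ k : ℕ,
      fderiv ℝ L (dpt q g k)
        ((δq k, δq (k + 1), δq (k + 2),
         ((g k)⁻¹ * g (k + 1)) * S (k + 1) - S k * ((g k)⁻¹ * g (k + 1)),
         ((g (k + 1))⁻¹ * g (k + 2)) * S (k + 2) - S (k + 1) * ((g (k + 1))⁻¹ * g (k + 2)))
          : Tup m n)
      = D1 L (dpt q g k) (δq k) + D2 L (dpt q g k) (δq (k + 1))
        + D3 L (dpt q g k) (δq (k + 2))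
        + (D4 L (dpt q g k) (((g k)⁻¹ * g (k + 1)) * S (k + 1))
           - D4 L (dpt q g k) (S k * ((g k)⁻¹ * g (k + 1))))
        + (D5 L (dpt q g k) (((g (k + 1))⁻¹ * g (k + 2)) * S (k + 2))
           - D5 L (dpt q g k) (S (k + 1) * ((g (k + 1))⁻¹ * g (k + 2)))) := by
    intro k
    rw [fderiv_decomp L _ (hdiff k)]
    simp [map_sub]
  rw [Finset.sum_congr rfl (fun k _ => hde k)]
  -- now split both sides into seven sums
  have h1 : ∑ j ∈ Finset.range (M + 5), (fun j => D1 L (dpt q g j) (δq j)) j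
      = ∑ k ∈ Finset.range (M + 3), D1 L (dpt q g k) (δq k) :=
    sumL0 M _ (by simp [hq3]) (by simp [hq4])
  have h2 : ∑ j ∈ Finset.range (M + 5), (fun j => D2 L (dpt q g (j - 1)) (δq j)) j
      = ∑ k ∈ Finset.range (M + 3), D2 L (dpt q g k) (δq (k + 1)) :=
    sumL1 M _ (by simp [hq0]) (by simp [hq4])
  have h3 : ∑ j ∈ Finset.range (M + 5), (fun j => D3 L (dpt q g (j - 2)) (δq j)) j
      = ∑ k ∈ Finset.range (M + 3), D3 L (dpt q g k) (δq (k + 2)) :=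
    sumL2 M _ (by simp [hq0]) (by simp [hq1])
  have h4a : ∑ j ∈ Finset.range (M + 5),
        (fun j => D4 L (dpt q g (j - 1)) ((g (j - 1))⁻¹ * g j * S j)) j
      = ∑ k ∈ Finset.range (M + 3), D4 L (dpt q g k) (((g k)⁻¹ * g (k + 1)) * S (k + 1)) :=
    sumL1 M _ (by simp [hS0]) (by simp [hS4])
  have h4b : ∑ j ∈ Finset.range (M + 5),
        (fun j => D4 L (dpt q g j) (S j * ((g j)⁻¹ * g (j + 1)))) j
      = ∑ k ∈ Finset.range (M + 3), D4 L (dpt q g k) (S k * ((g k)⁻¹ * g (k + 1))) :=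
    sumL0 M _ (by simp [hS3]) (by simp [hS4])
  have h5b : ∑ j ∈ Finset.range (M + 5),
        (fun j => D5 L (dpt q g (j - 1)) (S j * ((g j)⁻¹ * g (j + 1)))) j
      = ∑ k ∈ Finset.range (M + 3), D5 L (dpt q g k) (S (k + 1) * ((g (k + 1))⁻¹ * g (k + 2))) :=
    sumL1 M _ (by simp [hS0]) (by simp [hS4])
  have h5a : ∑ j ∈ Finset.range (M + 5),
        (fun j => D5 L (dpt q g (j - 2)) ((g (j - 1))⁻¹ * g j * S j)) j
      = ∑ k ∈ Finset.range (M + 3), D5 L (dpt q g k) (((g (k + 1))⁻¹ * g (k + 2)) * S (k + 2)) :=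
    sumL2 M _ (by simp [hS0]) (by simp [hS1])
  simp only [Pterm, Finset.sum_add_distrib, Finset.sum_sub_distrib] at *
  rw [← h1, ← h2, ← h3, ← h4a, ← h4b, ← h5a, ← h5b]
  ring



/-- **Discrete second-order Lagrange–Poincaré equations.**  For a `G`-invariant
discrete second-order Lagrangian the discrete action is stationary under all
variations fixing the boundary data if and only if the discrete second-order
Lagrange–Poincaré equations hold for `k = 2, …, N-2`. -/
theorem discrete_secondOrder_lagrange_poincare
    (N : ℕ) (hN : 4 ≤ N)
    (L : Tup m n → ℝ)
    (hL : ContDiffOn ℝ ∞ L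
      {p : Tup m n | IsUnit p.2.2.2.1 ∧ IsUnit p.2.2.2.2})
    (q : ℕ → Vec m) (g : ℕ → Mat n) (hg : ∀ i, IsUnit (g i)) :
    (∀ δq : ℕ → Vec m, δq 0 = 0 → δq 1 = 0 → δq (N - 1) = 0 → δq N = 0 →
      ∀ S : ℕ → Mat n, S 0 = 0 → S 1 = 0 → S (N - 1) = 0 → S N = 0 →
        deriv (fun ε : ℝ =>
          ∑ k ∈ Finset.range (N - 1),
            L (q k + ε • δq k, q (k + 1) + ε • δq (k + 1), q (k + 2) + ε • δq (k + 2),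
              NormedSpace.exp (-(ε • S k)) * ((g k)⁻¹ * g (k + 1))
                * NormedSpace.exp (ε • S (k + 1)),
              NormedSpace.exp (-(ε • S (k + 1))) * ((g (k + 1))⁻¹ * g (k + 2))
                * NormedSpace.exp (ε • S (k + 2)))) 0 = 0)
      ↔ ∀ k : ℕ, 2 ≤ k → k ≤ N - 2 →
        (D1 L (dpt q g k) + D2 L (dpt q g (k - 1)) + D3 L (dpt q g (k - 2)) = 0)
        ∧ ∀ η : Mat n,
            D4 L (dpt q g (k - 1)) ((g (k - 1))⁻¹ * g k * η)
              - D4 L (dpt q g k) (η * ((g k)⁻¹ * g (k + 1)))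
              - D5 L (dpt q g (k - 1)) (η * ((g k)⁻¹ * g (k + 1)))
              + D5 L (dpt q g (k - 2)) ((g (k - 1))⁻¹ * g k * η) = 0 := by
  obtain ⟨M, rfl⟩ : ∃ M, N = M + 4 := ⟨N - 4, by omega⟩
  constructor
  · intro Hstat k hk2 hkM
    have hkM' : k ≤ M + 2 := by omega
    constructor
    · ext v
      have h := Hstat (fun j => if j = k then v else 0)
        (if_neg (by omega)) (if_neg (by omega)) (if_neg (by omega)) (if_neg (by omega))
        (fun _ => 0) rfl rfl rfl rfl
      have hm := master M L hL q g hg (fun j => if j = k then v else 0) (fun _ => 0)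
        (if_neg (by omega)) (if_neg (by omega)) (if_neg (by omega)) (if_neg (by omega))
        rfl rfl rfl rfl
      have key : ∑ j ∈ Finset.range (M + 5),
          Pterm L q g (fun j => if j = k then v else 0) (fun _ => 0) j = 0 :=
        hm.symm.trans h
      have hsingle : ∑ j ∈ Finset.range (M + 5),
          Pterm L q g (fun j => if j = k then v else 0) (fun _ => 0) j
          = Pterm L q g (fun j => if j = k then v else 0) (fun _ => 0) k :=
        Finset.sum_eq_single_of_mem k (Finset.mem_range.2 (by omega))
          (fun j _ hjk => by simp [Pterm, hjk])
      have hval : Pterm L q g (fun j => if j = k then v else 0) (fun _ => 0) k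
          = D1 L (dpt q g k) v + D2 L (dpt q g (k - 1)) v + D3 L (dpt q g (k - 2)) v := by
        simp [Pterm]
      simp only [ContinuousLinearMap.add_apply, ContinuousLinearMap.zero_apply]
      rw [hval] at hsingle
      linarith [key, hsingle]
    · intro η
      have h := Hstat (fun _ => 0) rfl rfl rfl rfl
        (fun j => if j = k then η else 0)
        (if_neg (by omega)) (if_neg (by omega)) (if_neg (by omega)) (if_neg (by omega))
      have hm := master M L hL q g hg (fun _ => 0) (fun j => if j = k then η else 0)
        rfl rfl rfl rfl
        (if_neg (by omega)) (if_neg (by omega)) (if_neg (by omega)) (if_neg (by omega))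
      have key : ∑ j ∈ Finset.range (M + 5),
          Pterm L q g (fun _ => 0) (fun j => if j = k then η else 0) j = 0 :=
        hm.symm.trans h
      have hsingle : ∑ j ∈ Finset.range (M + 5),
          Pterm L q g (fun _ => 0) (fun j => if j = k then η else 0) j
          = Pterm L q g (fun _ => 0) (fun j => if j = k then η else 0) k :=
        Finset.sum_eq_single_of_mem k (Finset.mem_range.2 (by omega))
          (fun j _ hjk => by simp [Pterm, hjk])
      have hval : Pterm L q g (fun _ => 0) (fun j => if j = k then η else 0) k
          = D4 L (dpt q g (k - 1)) ((g (k - 1))⁻¹ * g k * η)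
            - D4 L (dpt q g k) (η * ((g k)⁻¹ * g (k + 1)))
            - D5 L (dpt q g (k - 1)) (η * ((g k)⁻¹ * g (k + 1)))
            + D5 L (dpt q g (k - 2)) ((g (k - 1))⁻¹ * g k * η) := by
        simp [Pterm]
      rw [hval] at hsingle
      linarith [key, hsingle]
  · intro Heq δq hb0 hb1 hb3 hb4 S hs0 hs1 hs3 hs4
    have hb3' : δq (M + 3) = 0 := hb3
    have hb4' : δq (M + 4) = 0 := hb4
    have hs3' : S (M + 3) = 0 := hs3
    have hs4' : S (M + 4) = 0 := hs4
    have hm := master M L hL q g hg δq S hb0 hb1 hb3' hb4' hs0 hs1 hs3' hs4'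
    refine hm.trans ?_
    apply Finset.sum_eq_zero
    intro j hj
    rcases Nat.lt_or_ge j 2 with h2 | h2
    · interval_cases j
      · simp [Pterm, hb0, hs0]
      · simp [Pterm, hb1, hs1]
    · rcases Nat.lt_or_ge j (M + 3) with h3 | h3
      · obtain ⟨hA, hB⟩ := Heq j h2 (by omega)
        have hA' := DFunLike.congr_fun hA (δq j)
        simp only [ContinuousLinearMap.add_apply, ContinuousLinearMap.zero_apply] at hA'
        have hB' := hB (S j)
        simp only [Pterm]
        linarith
      · have hj5 := Finset.mem_range.1 hj
        have : j = M + 3 ∨ j = M + 4 := by omega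
        rcases this with rfl | rfl
        · simp [Pterm, hb3', hs3']
        · simp [Pterm, hb4', hs4']

end Stmt9
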